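/- Let ℓ_u, ℓ_r : ℝ^n → ℝ with |ℓ_r(θ)| ≤ B for all θ. Let t ≥ 1 and λ_1, …, λ_t ≥ 0, and set λ̄ = (1/t) Σ_{i=1}^{t} λ_i. Define C_λ(θ) = ℓ_u(θ) + λ ℓ_r(θ). Suppose θ* ∈ ℝ^n minimizes θ ↦ Σ_{i=1}^{t} C_{λ_i}(θ) over ℝ^n, and for each i, θ*_i ∈ ℝ^n minimizes C_{λ_i} over ℝ^n. Then Σ_{i=1}^{t} C_{λ_i}(θ*) − Σ_{i=1}^{t} C_{λ_i}(θ*_i) ≤ B Σ_{i=1}^{t} |λ̄ − λ_i|. -/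

import Mathlib

open scoped RealInnerProductSpace BigOperators

/-- Stability lemma: with `|ℓ_r| ≤ B`, `λ_i ≥ 0`, mean
`λ̄ = (1/t)Σ λ_i`, `θ*` a minimizer of `Σ_i C_{λ_i}` and `θ*_i` a minimizer of
`C_{λ_i}` (where `C_λ = ℓ_u + λ ℓ_r`), one has
`Σ_i C_{λ_i}(θ*) − Σ_i C_{λ_i}(θ*_i) ≤ B Σ_i |λ̄ − λ_i|`. -/
theorem static_dynamic_comparator_gap {n : ℕ}
    (ℓu ℓr : EuclideanSpace ℝ (Fin n) → ℝ) (B : ℝ)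
    (hB : ∀ x, |ℓr x| ≤ B)
    (t : ℕ) (ht : 1 ≤ t) (lam : ℕ → ℝ)
    (hlam : ∀ i, 1 ≤ i → i ≤ t → 0 ≤ lam i)
    (θstar : EuclideanSpace ℝ (Fin n))
    (θi : ℕ → EuclideanSpace ℝ (Fin n))
    (hstar : ∀ θ : EuclideanSpace ℝ (Fin n),
      ∑ i ∈ Finset.Icc 1 t, (ℓu θstar + lam i * ℓr θstar)
        ≤ ∑ i ∈ Finset.Icc 1 t, (ℓu θ + lam i * ℓr θ))
    (hi : ∀ i, 1 ≤ i → i ≤ t → ∀ θ : EuclideanSpace ℝ (Fin n),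
      ℓu (θi i) + lam i * ℓr (θi i) ≤ ℓu θ + lam i * ℓr θ) :
    ∑ i ∈ Finset.Icc 1 t, (ℓu θstar + lam i * ℓr θstar)
        - ∑ i ∈ Finset.Icc 1 t, (ℓu (θi i) + lam i * ℓr (θi i))
      ≤ B * ∑ i ∈ Finset.Icc 1 t,
          |(1 / (t : ℝ)) * (∑ j ∈ Finset.Icc 1 t, lam j) - lam i| := by
  set m : ℝ := (1 / (t : ℝ)) * (∑ j ∈ Finset.Icc 1 t, lam j) with hm
  have htpos : (0 : ℝ) < t := by exact_mod_cast ht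
  have hcard : (Finset.Icc 1 t).card = t := by simp
  have hsumlam : ∑ j ∈ Finset.Icc 1 t, lam j = t * m := by
    rw [hm]; field_simp
  -- any sum of the composite losses equals t * C_{m}(θ)
  have hsum : ∀ θ : EuclideanSpace ℝ (Fin n),
      ∑ i ∈ Finset.Icc 1 t, (ℓu θ + lam i * ℓr θ)
        = (t : ℝ) * (ℓu θ + m * ℓr θ) := by
    intro θ
    rw [Finset.sum_add_distrib, Finset.sum_const, hcard, ← Finset.sum_mul,
      hsumlam]
    ring
  -- θ* minimizes C_m
  have hminm : ∀ θ, ℓu θstar + m * ℓr θstar ≤ ℓu θ + m * ℓr θ := by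
    intro θ
    have := hstar θ
    rw [hsum θstar, hsum θ] at this
    exact le_of_mul_le_mul_left this htpos
  calc ∑ i ∈ Finset.Icc 1 t, (ℓu θstar + lam i * ℓr θstar)
        - ∑ i ∈ Finset.Icc 1 t, (ℓu (θi i) + lam i * ℓr (θi i))
      = ∑ i ∈ Finset.Icc 1 t,
          ((ℓu θstar + m * ℓr θstar) - (ℓu (θi i) + lam i * ℓr (θi i))) := by
        rw [Finset.sum_sub_distrib, hsum θstar, Finset.sum_const, hcard,
          nsmul_eq_mul]
    _ ≤ ∑ i ∈ Finset.Icc 1 t, B * |m - lam i| := by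
        apply Finset.sum_le_sum
        intro i hi'
        rw [Finset.mem_Icc] at hi'
        have h1 := hminm (θi i)
        have h2 : (m - lam i) * ℓr (θi i) ≤ B * |m - lam i| := by
          calc (m - lam i) * ℓr (θi i) ≤ |(m - lam i) * ℓr (θi i)| := le_abs_self _
            _ = |m - lam i| * |ℓr (θi i)| := abs_mul _ _
            _ ≤ |m - lam i| * B :=
                mul_le_mul_of_nonneg_left (hB _) (abs_nonneg _)
            _ = B * |m - lam i| := mul_comm _ _
        nlinarith [h1, h2]
    _ = B * ∑ i ∈ Finset.Icc 1 t, |m - lam i| := by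
        rw [Finset.mul_sum]
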